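/- arXiv:2501.14253 — 5 statements merged into one kernel-verified Lean document; each statement's English description precedes it below -/
import Mathlib

section
/- Let f : ℝ^n → ℝ and g : ℝ^d → ℝ be convex functions (everywhere finite), and let A be a real n×d matrix. Define the convex conjugates f*(u) = sup_{ψ∈ℝ^n} (u·ψ − f(ψ)) and g*(φ) = sup_{p∈ℝ^d} (φ·p − g(p)), taking values in ℝ ∪ {+∞}. Then, as an equality in the extended reals, inf_{p∈ℝ^d} [f(Ap) + g(p)] = sup_{u∈ℝ^n} [−f*(−u) − g*(Aᵀu)]. -/
/-- The convex conjugate of `h : ℝ^m → ℝ`, valued in the extended reals: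
`h*(u) = sup_p (u·p − h(p))`. -/
noncomputable def fenchelConj {m : ℕ} (h : (Fin m → ℝ) → ℝ) : (Fin m → ℝ) → EReal :=
  fun u => ⨆ p : Fin m → ℝ, ((∑ i, u i * p i - h p : ℝ) : EReal)

/-- Fenchel's duality theorem, everywhere-finite convex case:
for convex `f : ℝ^n → ℝ`, convex `g : ℝ^d → ℝ` and a matrix `A ∈ ℝ^{n×d}`,
`inf_p [f(Ap) + g(p)] = sup_u [−f*(−u) − g*(Aᵀu)]` as an equality in the
extended reals. -/
theorem fenchel_duality {n d : ℕ} (f : (Fin n → ℝ) → ℝ) (g : (Fin d → ℝ) → ℝ)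
    (hf : ConvexOn ℝ Set.univ f) (hg : ConvexOn ℝ Set.univ g)
    (A : Matrix (Fin n) (Fin d) ℝ) :
    (⨅ p : Fin d → ℝ, ((f (A.mulVec p) + g p : ℝ) : EReal)) =
      ⨆ u : Fin n → ℝ, (-(fenchelConj f (-u)) - fenchelConj g (A.transpose.mulVec u)) := by
  have hfc : Continuous f := by
    rw [← continuousOn_univ]; exact hf.continuousOn isOpen_univ
  have hgc : Continuous g := by
    rw [← continuousOn_univ]; exact hg.continuousOn isOpen_univ
  have hdot : ∀ (u : Fin n → ℝ) (p : Fin d → ℝ),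
      ∑ j, (A.transpose.mulVec u) j * p j = ∑ i, u i * (A.mulVec p) i := by
    intro u p
    have h1 := Matrix.dotProduct_mulVec u A p
    rw [Matrix.mulVec_transpose]
    simpa [dotProduct] using h1.symm
  set I : EReal := ⨅ p : Fin d → ℝ, ((f (A.mulVec p) + g p : ℝ) : EReal) with hI
  -- weak duality
  have weak : ∀ u : Fin n → ℝ,
      -(fenchelConj f (-u)) - fenchelConj g (A.transpose.mulVec u) ≤ I := by
    intro u
    refine le_iInf fun p => ?_
    have h1 : ((∑ i, (-u) i * (A.mulVec p) i - f (A.mulVec p) : ℝ) : EReal)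
        ≤ fenchelConj f (-u) :=
      le_iSup (fun q : Fin n → ℝ => ((∑ i, (-u) i * q i - f q : ℝ) : EReal)) (A.mulVec p)
    have h2 : ((∑ j, (A.transpose.mulVec u) j * p j - g p : ℝ) : EReal)
        ≤ fenchelConj g (A.transpose.mulVec u) :=
      le_iSup (fun q : Fin d → ℝ =>
        ((∑ j, (A.transpose.mulVec u) j * q j - g q : ℝ) : EReal)) p
    have h1' : -(fenchelConj f (-u))
        ≤ ((-(∑ i, (-u) i * (A.mulVec p) i - f (A.mulVec p)) : ℝ) : EReal) := by
      rw [EReal.coe_neg, EReal.neg_le, neg_neg]; exact h1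
    have h2' : -(fenchelConj g (A.transpose.mulVec u))
        ≤ ((-(∑ j, (A.transpose.mulVec u) j * p j - g p) : ℝ) : EReal) := by
      rw [EReal.coe_neg, EReal.neg_le, neg_neg]; exact h2
    have h3 := add_le_add h1' h2'
    rw [← EReal.coe_add] at h3
    have hneg : ∑ i, (-u) i * (A.mulVec p) i = -∑ i, u i * (A.mulVec p) i := by
      simp [neg_mul]
    have heq : (-(∑ i, (-u) i * (A.mulVec p) i - f (A.mulVec p))
        + -(∑ j, (A.transpose.mulVec u) j * p j - g p)) = f (A.mulVec p) + g p := by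
      rw [hdot u p, hneg]; ring
    rw [heq] at h3
    exact h3
  refine le_antisymm ?_ (iSup_le weak)
  by_cases hbot : I = ⊥
  · rw [hbot]; exact bot_le
  have htop : I ≠ ⊤ :=
    ne_top_of_le_ne_top (EReal.coe_ne_top _) (iInf_le _ (0 : Fin d → ℝ))
  obtain ⟨m, hm⟩ : ∃ m : ℝ, I = (m : EReal) := ⟨I.toReal, (EReal.coe_toReal htop hbot).symm⟩
  -- the open convex set
  set C : Set ((Fin n → ℝ) × ℝ) :=
    {q | ∃ p : Fin d → ℝ, f (A.mulVec p + q.1) + g p < q.2} with hC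
  have hCopen : IsOpen C := by
    have : C = ⋃ p : Fin d → ℝ, {q : (Fin n → ℝ) × ℝ | f (A.mulVec p + q.1) + g p < q.2} := by
      ext q; simp [hC, Set.mem_iUnion]
    rw [this]
    refine isOpen_iUnion fun p => isOpen_lt ?_ continuous_snd
    exact (hfc.comp (continuous_const.add continuous_fst)).add continuous_const
  have hCconv : Convex ℝ C := by
    rintro ⟨x1, t1⟩ ⟨p1, hp1⟩ ⟨x2, t2⟩ ⟨p2, hp2⟩ a b ha hb hab
    refine ⟨a • p1 + b • p2, ?_⟩
    simp only [Prod.smul_mk, Prod.mk_add_mk, smul_eq_mul]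
    have hlin : A.mulVec (a • p1 + b • p2) + (a • x1 + b • x2)
        = a • (A.mulVec p1 + x1) + b • (A.mulVec p2 + x2) := by
      rw [Matrix.mulVec_add, Matrix.mulVec_smul, Matrix.mulVec_smul]
      module
    have h1 := hf.2 (Set.mem_univ (A.mulVec p1 + x1)) (Set.mem_univ (A.mulVec p2 + x2)) ha hb hab
    have h2 := hg.2 (Set.mem_univ p1) (Set.mem_univ p2) ha hb hab
    rw [hlin]
    rcases ha.eq_or_lt with h | hapos
    · have hb1 : b = 1 := by linarith
      subst hb1; simp only [← h, zero_smul, zero_add, one_smul, smul_eq_mul] at *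
      linarith
    rcases hb.eq_or_lt with h | hbpos
    · have ha1 : a = 1 := by linarith
      subst ha1; simp only [← h, zero_smul, add_zero, one_smul, smul_eq_mul] at *
      linarith
    have h3 := mul_lt_mul_of_pos_left hp1 hapos
    have h4 := mul_lt_mul_of_pos_left hp2 hbpos
    simp only [smul_eq_mul] at h1 h2
    nlinarith
  have hnotmem : ((0 : Fin n → ℝ), m) ∉ C := by
    rintro ⟨p, hp⟩
    have hle : I ≤ ((f (A.mulVec p) + g p : ℝ) : EReal) := iInf_le _ p
    rw [hm, EReal.coe_le_coe_iff] at hle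
    simp only [add_zero] at hp
    linarith
  obtain ⟨ℓ, s, hs1, hs2⟩ := geometric_hahn_banach_open hCconv hCopen
    (convex_singleton ((0 : Fin n → ℝ), m))
    (Set.disjoint_singleton_right.mpr hnotmem)
  have hs2' : s ≤ ℓ ((0 : Fin n → ℝ), m) := hs2 _ rfl
  have hdec : ∀ (x : Fin n → ℝ) (t : ℝ), ℓ (x, t) = ℓ (x, 0) + t * ℓ (0, 1) := by
    intro x t
    have : (x, t) = ((x, (0:ℝ)) + t • ((0 : Fin n → ℝ), (1:ℝ))) := by
      simp [Prod.ext_iff]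
    rw [this, map_add, map_smul, smul_eq_mul]
  set c0 := ℓ ((0 : Fin n → ℝ), 1) with hc0def
  have hzero : ℓ ((0 : Fin n → ℝ), (0:ℝ)) = 0 := by
    have : ((0 : Fin n → ℝ), (0:ℝ)) = (0 : (Fin n → ℝ) × ℝ) := rfl
    rw [this, map_zero]
  have hmemC : ∀ (x : Fin n → ℝ) (T : ℝ), f x + g 0 < T → (x, T) ∈ C := by
    intro x T hT
    exact ⟨0, by simpa [Matrix.mulVec_zero] using hT⟩
  have hc0neg : c0 < 0 := by
    rcases lt_or_ge c0 0 with h | h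
    · exact h
    exfalso
    rcases h.eq_or_lt with h0 | hpos
    · have h1 : ℓ ((0:Fin n → ℝ), f 0 + g 0 + 1) < s :=
        hs1 _ (hmemC 0 _ (by linarith))
      rw [hdec, hzero, ← h0, mul_zero, add_zero] at h1
      rw [hdec, hzero, ← h0, mul_zero, add_zero] at hs2'
      linarith
    · set T := max (f 0 + g 0 + 1) ((s + 1) / c0) with hT
      have h1 : ℓ ((0:Fin n → ℝ), T) < s := hs1 _ (hmemC 0 _ (by
        have := le_max_left (f 0 + g 0 + 1) ((s + 1) / c0); linarith))
      rw [hdec, hzero, zero_add] at h1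
      have h2 : (s + 1) / c0 ≤ T := le_max_right _ _
      have h3 : s + 1 ≤ T * c0 := by
        rw [div_le_iff₀ hpos] at h2; linarith
      linarith
  -- the key inequality
  have hkey : ∀ (y : Fin n → ℝ) (p : Fin d → ℝ),
      ℓ (y - A.mulVec p, 0) + (f y + g p) * c0 ≤ m * c0 := by
    intro y p
    have hstep : ∀ ε : ℝ, 0 < ε →
        ℓ (y - A.mulVec p, 0) + (f y + g p + ε) * c0 < m * c0 := by
      intro ε hε
      have hmem : (y - A.mulVec p, f y + g p + ε) ∈ C := by
        refine ⟨p, ?_⟩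
        simp only
        rw [add_sub_cancel]
        linarith
      have h1 := hs1 _ hmem
      rw [hdec] at h1
      have hs3 := hs2'
      rw [hdec, hzero, zero_add] at hs3
      linarith
    by_contra hcon
    push_neg at hcon
    set δ := (ℓ (y - A.mulVec p, 0) + (f y + g p) * c0 - m * c0) / (-c0) with hδ
    have hδpos : 0 < δ := div_pos (by linarith) (by linarith)
    have h5 := hstep δ hδpos
    have hmul : δ * (-c0) = ℓ (y - A.mulVec p, 0) + (f y + g p) * c0 - m * c0 := by
      rw [hδ, div_mul_cancel₀]
      linarith
    nlinarith
  -- extract the linear functional as a vector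
  set L : (Fin n → ℝ) →L[ℝ] ℝ := ℓ.comp (ContinuousLinearMap.inl ℝ (Fin n → ℝ) ℝ) with hLdef
  set w : Fin n → ℝ := fun i => L (Pi.single i 1) / (-c0) with hw
  have hwdot : ∀ x : Fin n → ℝ, ∑ i, w i * x i = L x / (-c0) := by
    intro x
    have hx := LinearMap.pi_apply_eq_sum_univ (L.toLinearMap) x
    simp only [ContinuousLinearMap.coe_coe] at hx
    rw [hx, Finset.sum_div]
    refine Finset.sum_congr rfl fun i _ => ?_
    have hsingle : (fun j => if i = j then (1:ℝ) else 0) = Pi.single i 1 := by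
      ext j; simp [Pi.single_apply, eq_comm]
    rw [hsingle, hw]
    simp only [smul_eq_mul]
    ring
  have hcpos : (0:ℝ) < -c0 := by linarith
  -- the combined real inequality
  have hkey2 : ∀ (y : Fin n → ℝ) (p : Fin d → ℝ),
      (∑ i, w i * y i - f y) + (∑ j, (-(A.transpose.mulVec w)) j * p j - g p) ≤ -m := by
    intro y p
    have h1 := hkey y p
    have h2 : ℓ (y - A.mulVec p, 0) = L y - L (A.mulVec p) := by
      rw [← map_sub]; rfl
    rw [h2] at h1
    have h3 : ∑ j, (-(A.transpose.mulVec w)) j * p j = -(∑ i, w i * (A.mulVec p) i) := by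
      rw [← hdot w p, ← Finset.sum_neg_distrib]
      exact Finset.sum_congr rfl fun j _ => by simp [neg_mul]
    rw [h3, hwdot y, hwdot (A.mulVec p)]
    have h7 : c0 / -c0 = -1 := by rw [div_neg, div_self hc0neg.ne]
    have h6 : (L y - L (A.mulVec p) + (f y + g p) * c0) / (-c0) ≤ (m * c0) / (-c0) :=
      div_le_div_of_nonneg_right h1 hcpos.le
    rw [add_div, sub_div, mul_div_assoc, mul_div_assoc, h7] at h6
    linarith
  -- the conjugates at w are finite reals
  have hFub : ∀ p, fenchelConj f w
      ≤ ((-m - (∑ j, (-(A.transpose.mulVec w)) j * p j - g p) : ℝ) : EReal) := by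
    intro p
    refine iSup_le fun y => ?_
    rw [EReal.coe_le_coe_iff]
    have := hkey2 y p
    linarith
  have hFlb : ((∑ i, w i * (0:Fin n → ℝ) i - f 0 : ℝ) : EReal) ≤ fenchelConj f w :=
    le_iSup (fun q : Fin n → ℝ => ((∑ i, w i * q i - f q : ℝ) : EReal)) 0
  have hFtop : fenchelConj f w ≠ ⊤ := ne_top_of_le_ne_top (EReal.coe_ne_top _) (hFub 0)
  have hFbot : fenchelConj f w ≠ ⊥ :=
    fun h => absurd (h ▸ hFlb) (by simp)
  obtain ⟨Fr, hFr⟩ : ∃ Fr : ℝ, fenchelConj f w = (Fr : EReal) :=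
    ⟨_, (EReal.coe_toReal hFtop hFbot).symm⟩
  have hGub : fenchelConj g (-(A.transpose.mulVec w)) ≤ ((-m - Fr : ℝ) : EReal) := by
    refine iSup_le fun p => ?_
    rw [EReal.coe_le_coe_iff]
    have h1 := hFub p
    rw [hFr, EReal.coe_le_coe_iff] at h1
    linarith
  have hGlb : ((∑ j, (-(A.transpose.mulVec w)) j * (0:Fin d → ℝ) j - g 0 : ℝ) : EReal)
      ≤ fenchelConj g (-(A.transpose.mulVec w)) :=
    le_iSup (fun q : Fin d → ℝ =>
      ((∑ j, (-(A.transpose.mulVec w)) j * q j - g q : ℝ) : EReal)) 0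
  have hGtop : fenchelConj g (-(A.transpose.mulVec w)) ≠ ⊤ :=
    ne_top_of_le_ne_top (EReal.coe_ne_top _) hGub
  have hGbot : fenchelConj g (-(A.transpose.mulVec w)) ≠ ⊥ :=
    fun h => absurd (h ▸ hGlb) (by simp)
  obtain ⟨Gr, hGr⟩ : ∃ Gr : ℝ, fenchelConj g (-(A.transpose.mulVec w)) = (Gr : EReal) :=
    ⟨_, (EReal.coe_toReal hGtop hGbot).symm⟩
  have hsum : Fr + Gr ≤ -m := by
    have := hGub
    rw [hGr, EReal.coe_le_coe_iff] at this
    linarith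
  -- conclude
  rw [hm]
  refine le_trans ?_ (le_iSup (fun u : Fin n → ℝ =>
    -(fenchelConj f (-u)) - fenchelConj g (A.transpose.mulVec u)) (-w))
  rw [neg_neg, Matrix.mulVec_neg, hFr, hGr]
  rw [← EReal.coe_neg, ← EReal.coe_sub, EReal.coe_le_coe_iff]
  linarith
end

section
/- Sandwich bounds on the weighted validation error via a parameter ball: in the validation setup, let B ⊆ ℝ^k be a set of parameter vectors and let β ∈ B. Define n_sc = Σ_i w'_i · I[for all β′ ∈ B, y'_i ⟨β′, φ(x'_i)⟩ > 0] and n_si = Σ_i w'_i · I[for all β′ ∈ B, y'_i ⟨β′, φ(x'_i)⟩ < 0]. Then n_si / (Σ_i w'_i) ≤ VaEr(β; w') ≤ (Σ_i w'_i − n_sc) / (Σ_i w'_i). -/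
open scoped RealInnerProductSpace Classical

/-- sandwich bounds on the weighted validation error via a
parameter ball: in the validation setup, for a set `B ⊆ ℝ^k` of parameter
vectors containing `β`, with
`n_sc = Σ_i w'_i · I[∀ β' ∈ B, y'_i ⟨β', φ(x'_i)⟩ > 0]` and
`n_si = Σ_i w'_i · I[∀ β' ∈ B, y'_i ⟨β', φ(x'_i)⟩ < 0]`, one has
`n_si / Σ_i w'_i ≤ VaEr(β; w') ≤ (Σ_i w'_i − n_sc) / Σ_i w'_i`. -/
theorem validation_error_sandwich {n' d k : ℕ}
    (x' : Fin n' → Fin d → ℝ) (y' : Fin n' → ℝ) (hy : ∀ i, y' i = 1 ∨ y' i = -1)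
    (φ : (Fin d → ℝ) → EuclideanSpace ℝ (Fin k))
    (w' : Fin n' → ℝ) (hw : ∀ i, 0 ≤ w' i) (hW : 0 < ∑ i, w' i)
    (B : Set (EuclideanSpace ℝ (Fin k)))
    (β : EuclideanSpace ℝ (Fin k)) (hβ : β ∈ B) :
    (∑ i, w' i * (if ∀ β' ∈ B, y' i * ⟪β', φ (x' i)⟫ < 0 then (1 : ℝ) else 0))
        / (∑ i, w' i)
      ≤ (∑ i, w' i * (if y' i * ⟪β, φ (x' i)⟫ ≤ 0 then (1 : ℝ) else 0)) / (∑ i, w' i) ∧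
    (∑ i, w' i * (if y' i * ⟪β, φ (x' i)⟫ ≤ 0 then (1 : ℝ) else 0)) / (∑ i, w' i)
      ≤ ((∑ i, w' i)
          - ∑ i, w' i * (if ∀ β' ∈ B, 0 < y' i * ⟪β', φ (x' i)⟫ then (1 : ℝ) else 0))
        / (∑ i, w' i) := by
  constructor
  · gcongr ?_ / ∑ i, w' i
    apply Finset.sum_le_sum
    intro i _
    apply mul_le_mul_of_nonneg_left _ (hw i)
    split_ifs with h1 h2
    · exact le_rfl
    · exact absurd (le_of_lt (h1 β hβ)) h2
    all_goals simp
  · gcongr ?_ / ∑ i, w' i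
    rw [← Finset.sum_sub_distrib]
    apply Finset.sum_le_sum
    intro i _
    rw [← mul_one_sub]
    apply mul_le_mul_of_nonneg_left _ (hw i)
    split_ifs with h1 h2
    · exact absurd (h2 β hβ) (not_lt.mpr h1)
    all_goals norm_num
end

section
/- Minimization of a binary score sum over a weight sphere intersected with a sum constraint: let n' ≥ 1, ζ ∈ {0,1}^{n'}, Q > 0, and let m = Σ_i ζ_i. Then the infimum of ζ·w' over the set {w' ∈ ℝ^{n'} : ‖w' − 1_{n'}‖₂ ≤ Q and Σ_i w'_i = n'} equals m − Q √(m − m²/n'), and this infimum is attained. -/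
/-- The all-ones vector in `ℝ^n` (as a Euclidean space). -/
noncomputable def onesVec (n : ℕ) : EuclideanSpace ℝ (Fin n) := WithLp.toLp 2 (fun _ => 1)

/-- minimization of a binary score sum over a weight sphere with a
sum constraint: for `n' ≥ 1`, `ζ ∈ {0,1}^{n'}`, `Q > 0` and `m = Σ_i ζ_i`, the
infimum of `ζ·w'` over `{w' : ‖w' − 1‖₂ ≤ Q ∧ Σ_i w'_i = n'}` equals
`m − Q √(m − m²/n')`, and it is attained. -/
theorem binary_score_min_over_sphere {n' : ℕ} (hn : 1 ≤ n')
    (ζ : EuclideanSpace ℝ (Fin n')) (hζ : ∀ i, ζ i = 0 ∨ ζ i = 1)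
    (Q : ℝ) (hQ : 0 < Q) (m : ℝ) (hm : m = ∑ i, ζ i) :
    IsLeast ((fun w' : EuclideanSpace ℝ (Fin n') => ∑ i, ζ i * w' i) ''
        {w' | ‖w' - onesVec n'‖ ≤ Q ∧ ∑ i, w' i = (n' : ℝ)})
      (m - Q * Real.sqrt (m - m ^ 2 / (n' : ℝ))) := by
  have hn0 : (n' : ℝ) ≠ 0 := Nat.cast_ne_zero.mpr (by omega)
  set v : EuclideanSpace ℝ (Fin n') := ζ - (m / (n' : ℝ)) • onesVec n' with hv
  have hvi : ∀ i, v i = ζ i - m / (n' : ℝ) := by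
    intro i; simp [hv, onesVec]
  have hsq : ∀ i, ζ i * ζ i = ζ i := by
    intro i; rcases hζ i with h | h <;> simp [h]
  -- ∑ v i * v i = m - m²/n'
  have key : (∑ i, v i * v i) = m - m ^ 2 / (n' : ℝ) := by
    have hpt : ∀ i, v i * v i
        = ζ i - 2 * (m / (n' : ℝ)) * ζ i + (m / (n' : ℝ)) ^ 2 := by
      intro i; rw [hvi i]; rcases hζ i with h | h <;> rw [h] <;> ring
    rw [Finset.sum_congr rfl fun i _ => hpt i]
    rw [Finset.sum_add_distrib, Finset.sum_sub_distrib, ← Finset.mul_sum,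
      Finset.sum_const, Finset.card_fin, ← hm, nsmul_eq_mul]
    field_simp
    ring
  have hnorm2 : ‖v‖ ^ 2 = m - m ^ 2 / (n' : ℝ) := by
    rw [← real_inner_self_eq_norm_sq]
    simpa only [PiLp.inner_apply, RCLike.inner_apply, conj_trivial] using key
  have hnormv : Real.sqrt (m - m ^ 2 / (n' : ℝ)) = ‖v‖ := by
    rw [← hnorm2, Real.sqrt_sq (norm_nonneg v)]
  have hsumv : (∑ i, v i) = 0 := by
    simp only [hvi]
    rw [Finset.sum_sub_distrib, ← hm, Finset.sum_const, Finset.card_fin, nsmul_eq_mul]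
    field_simp
    ring
  have hζv : (∑ i, ζ i * v i) = m - m ^ 2 / (n' : ℝ) := by
    have hpt : ∀ i, ζ i * v i = ζ i - (m / (n' : ℝ)) * ζ i := by
      intro i; rw [hvi i]; have := hsq i; ring_nf; nlinarith [hsq i]
    rw [Finset.sum_congr rfl fun i _ => hpt i]
    rw [Finset.sum_sub_distrib, ← Finset.mul_sum, ← hm]
    field_simp
  constructor
  · -- membership: the minimizer
    refine ⟨onesVec n' - (Q / ‖v‖) • v, ⟨?_, ?_⟩, ?_⟩
    · have : onesVec n' - (Q / ‖v‖) • v - onesVec n' = -((Q / ‖v‖) • v) := by abel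
      rw [this, norm_neg, norm_smul]
      by_cases hv0 : ‖v‖ = 0
      · simp [hv0]; positivity
      · have hvpos : 0 < ‖v‖ := lt_of_le_of_ne (norm_nonneg v) (Ne.symm hv0)
        rw [Real.norm_eq_abs, abs_of_pos (by positivity)]
        field_simp
        exact le_rfl
    · have : ∀ i, (onesVec n' - (Q / ‖v‖) • v) i = 1 - (Q / ‖v‖) * v i := by
        intro i; simp [onesVec]
      rw [Finset.sum_congr rfl fun i _ => this i, Finset.sum_sub_distrib,
        Finset.sum_const, Finset.card_fin, ← Finset.mul_sum, hsumv]
      simp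
    · have hpt : ∀ i, ζ i * (onesVec n' - (Q / ‖v‖) • v) i
          = ζ i - (Q / ‖v‖) * (ζ i * v i) := by
        intro i; simp [onesVec]; ring
      simp only [hpt]
      rw [Finset.sum_sub_distrib, ← Finset.mul_sum, ← hm, hζv, ← hnorm2, Real.sqrt_sq (norm_nonneg v)]
      by_cases hv0 : ‖v‖ = 0
      · simp [hv0]
      · field_simp
  · -- lower bound
    rintro x ⟨w', ⟨hw1, hw2⟩, rfl⟩
    have hinner : (inner ℝ v (w' - onesVec n') : ℝ) = (∑ i, ζ i * w' i) - m := by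
      simp only [PiLp.inner_apply, RCLike.inner_apply, conj_trivial, PiLp.sub_apply]
      have hpt : ∀ i, v i * (w' i - onesVec n' i)
          = ζ i * w' i - ζ i - (m / (n' : ℝ)) * w' i + (m / (n' : ℝ)) := by
        intro i; rw [hvi i]; simp [onesVec]; ring
      rw [Finset.sum_congr rfl fun i _ => (mul_comm _ _).trans (hpt i)]
      rw [Finset.sum_add_distrib, Finset.sum_sub_distrib, Finset.sum_sub_distrib,
        ← Finset.mul_sum, hw2, ← hm, Finset.sum_const, Finset.card_fin, nsmul_eq_mul]
      field_simp
      ring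
    have hcs : |(inner ℝ v (w' - onesVec n') : ℝ)| ≤ ‖v‖ * ‖w' - onesVec n'‖ :=
      abs_real_inner_le_norm v (w' - onesVec n')
    have hbound : ‖v‖ * ‖w' - onesVec n'‖ ≤ ‖v‖ * Q :=
      mul_le_mul_of_nonneg_left hw1 (norm_nonneg v)
    have := neg_abs_le (inner ℝ v (w' - onesVec n') : ℝ)
    rw [hnormv]
    simp only
    nlinarith [hinner, hcs, hbound]
end

section
/- Validation error bound from a parameter ball via the surely-correct indicator: in the validation setup, assume additionally that Σ_i w'_i = n'. Let β₀ ∈ ℝ^k, R ≥ 0, and let β ∈ ℝ^k satisfy ‖β − β₀‖ ≤ R. Define ζ ∈ {0,1}^{n'} by ζ_i = I[y'_i ⟨β₀, φ(x'_i)⟩ − ‖φ(x'_i)‖ R > 0]. Then VaEr(β; w') ≤ 1 − (Σ_i ζ_i w'_i)/n'. -/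
open scoped RealInnerProductSpace Classical

/-- validation error bound from a parameter ball via the
surely-correct indicator: in the validation setup with `Σ_i w'_i = n'`, if
`‖β − β₀‖ ≤ R` and `ζ_i = I[y'_i ⟨β₀, φ(x'_i)⟩ − ‖φ(x'_i)‖ R > 0]`, then
`VaEr(β; w') ≤ 1 − (Σ_i ζ_i w'_i)/n'`. -/
theorem validation_error_bound_from_ball {n' d k : ℕ}
    (x' : Fin n' → Fin d → ℝ) (y' : Fin n' → ℝ) (hy : ∀ i, y' i = 1 ∨ y' i = -1)
    (φ : (Fin d → ℝ) → EuclideanSpace ℝ (Fin k))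
    (w' : Fin n' → ℝ) (hw : ∀ i, 0 ≤ w' i) (hW : 0 < ∑ i, w' i)
    (hsum : ∑ i, w' i = (n' : ℝ))
    (β₀ : EuclideanSpace ℝ (Fin k)) (R : ℝ) (hR : 0 ≤ R)
    (β : EuclideanSpace ℝ (Fin k)) (hβ : ‖β - β₀‖ ≤ R)
    (ζ : Fin n' → ℝ)
    (hζ : ∀ i, ζ i = if 0 < y' i * ⟪β₀, φ (x' i)⟫ - ‖φ (x' i)‖ * R then (1 : ℝ) else 0) :
    (∑ i, w' i * (if y' i * ⟪β, φ (x' i)⟫ ≤ 0 then (1 : ℝ) else 0)) / (∑ i, w' i)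
      ≤ 1 - (∑ i, ζ i * w' i) / (n' : ℝ) := by
  have key : ∀ i, w' i * (if y' i * ⟪β, φ (x' i)⟫ ≤ 0 then (1 : ℝ) else 0)
      ≤ w' i * (1 - ζ i) := by
    intro i
    rw [hζ i]
    by_cases h : 0 < y' i * ⟪β₀, φ (x' i)⟫ - ‖φ (x' i)‖ * R
    · simp only [h, if_true]
      have habs : |y' i * ⟪β - β₀, φ (x' i)⟫| ≤ ‖φ (x' i)‖ * R := by
        have h1 : |⟪β - β₀, φ (x' i)⟫| ≤ ‖β - β₀‖ * ‖φ (x' i)‖ :=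
          abs_real_inner_le_norm _ _
        have hy1 : |y' i| = 1 := by rcases hy i with h' | h' <;> simp [h']
        rw [abs_mul, hy1, one_mul]
        calc |⟪β - β₀, φ (x' i)⟫| ≤ ‖β - β₀‖ * ‖φ (x' i)‖ := h1
          _ ≤ R * ‖φ (x' i)‖ := by
              exact mul_le_mul_of_nonneg_right hβ (norm_nonneg _)
          _ = ‖φ (x' i)‖ * R := by ring
      have hpos : 0 < y' i * ⟪β, φ (x' i)⟫ := by
        have hdec : y' i * ⟪β, φ (x' i)⟫
            = y' i * ⟪β₀, φ (x' i)⟫ + y' i * ⟪β - β₀, φ (x' i)⟫ := by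
          rw [inner_sub_left]; ring
        have := neg_abs_le (y' i * ⟪β - β₀, φ (x' i)⟫)
        nlinarith [abs_nonneg (y' i * ⟪β - β₀, φ (x' i)⟫)]
      rw [if_neg (not_le.mpr hpos)]
      simp
    · simp only [h, if_false, sub_zero, mul_one]
      split_ifs with h2
      · simp [hw i]
      · simp [hw i]
  have hle : ∑ i, w' i * (if y' i * ⟪β, φ (x' i)⟫ ≤ 0 then (1 : ℝ) else 0)
      ≤ ∑ i, w' i * (1 - ζ i) := Finset.sum_le_sum fun i _ => key i
  have hrhs : ∑ i, w' i * (1 - ζ i) = (n' : ℝ) - ∑ i, ζ i * w' i := by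
    simp only [mul_sub, mul_one, Finset.sum_sub_distrib, hsum]
    congr 1
    exact Finset.sum_congr rfl fun i _ => mul_comm _ _
  rw [hsum] at hW
  rw [hsum]
  rw [div_le_iff₀ hW]
  have : (1 - (∑ i, ζ i * w' i) / (n' : ℝ)) * (n' : ℝ) = (n' : ℝ) - ∑ i, ζ i * w' i := by
    field_simp
  rw [this]
  linarith [hle, hrhs.le, hrhs.ge]
end

section
/- Upper bound on the worst-case weighted validation error (main theorem, L2-regularized form): consider the weighted ERM setup and the validation setup. Let S > 0, Q > 0, β₀ ∈ ℝ^k and R ≥ 0, and suppose that for every training weight vector w with ‖w − 1_n‖₂ ≤ S and Σ_i v_i w_i > 0, the (unique) minimizer β*_{v,w} of P_{v,w} satisfies ‖β*_{v,w} − β₀‖ ≤ R. Define ζ ∈ {0,1}^{n'} by ζ_i = I[y'_i ⟨β₀, φ(x'_i)⟩ − ‖φ(x'_i)‖ R > 0] and m = Σ_i ζ_i. Then for every such training weight w and every validation weight w' ∈ ℝ^{n'} with nonnegative entries, ‖w' − 1_{n'}‖₂ ≤ Q and Σ_i w'_i = n', one has VaEr(β*_{v,w}; w') ≤ 1 − (m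 − Q √(m − m²/n'))/n'. -/
open scoped RealInnerProductSpace Classical

/-- upper bound on the worst-case weighted validation error,
main theorem, L2-regularized form: consider the weighted ERM setup with primal
objective `P_{v,w}(β) = (1/E) Σ_i v_i w_i ℓ(y_i ⟨β, φ(x_i)⟩) + (λ/2)‖β‖²`,
`E = Σ_i v_i w_i`, and the validation setup. Suppose that for every training
weight `w` with `‖w − 1_n‖₂ ≤ S` and `E > 0`, any global minimizer `βstar` of
`P_{v,w}` satisfies `‖βstar − β₀‖ ≤ R`. With
`ζ_i = I[y'_i ⟨β₀, φ(x'_i)⟩ − ‖φ(x'_i)‖ R > 0]` and `m = Σ_i ζ_i`, for every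
such `w`, every such minimizer `βstar`, and every validation weight `w'` with
nonnegative entries, positive total weight, `‖w' − 1_{n'}‖₂ ≤ Q` and
`Σ_i w'_i = n'`, one has `VaEr(βstar; w') ≤ 1 − (m − Q √(m − m²/n'))/n'`. -/
theorem drcs_main_upper_bound {n n' d k : ℕ}
    (x : Fin n → Fin d → ℝ) (y : Fin n → ℝ) (hy : ∀ i, y i = 1 ∨ y i = -1)
    (φ : (Fin d → ℝ) → EuclideanSpace ℝ (Fin k))
    (v : Fin n → ℝ) (hv : ∀ i, v i = 0 ∨ v i = 1)
    (ℓ : ℝ → ℝ) (hℓ : ConvexOn ℝ Set.univ ℓ)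
    (lam : ℝ) (hlam : 0 < lam)
    (x' : Fin n' → Fin d → ℝ) (y' : Fin n' → ℝ) (hy' : ∀ i, y' i = 1 ∨ y' i = -1)
    (S : ℝ) (hS : 0 < S) (Q : ℝ) (hQ : 0 < Q)
    (β₀ : EuclideanSpace ℝ (Fin k)) (R : ℝ) (hR : 0 ≤ R)
    (ζ : Fin n' → ℝ)
    (hζ : ∀ i, ζ i = if 0 < y' i * ⟪β₀, φ (x' i)⟫ - ‖φ (x' i)‖ * R then (1 : ℝ) else 0)
    (m : ℝ) (hm : m = ∑ i, ζ i)
    (hball : ∀ w : EuclideanSpace ℝ (Fin n), ‖w - onesVec n‖ ≤ S →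
      0 < ∑ i, v i * w i →
      ∀ βstar : EuclideanSpace ℝ (Fin k),
        (∀ β : EuclideanSpace ℝ (Fin k),
          (1 / ∑ i, v i * w i) * (∑ i, v i * w i * ℓ (y i * ⟪βstar, φ (x i)⟫))
              + (lam / 2) * ‖βstar‖ ^ 2
            ≤ (1 / ∑ i, v i * w i) * (∑ i, v i * w i * ℓ (y i * ⟪β, φ (x i)⟫))
              + (lam / 2) * ‖β‖ ^ 2) →
        ‖βstar - β₀‖ ≤ R) :
    ∀ w : EuclideanSpace ℝ (Fin n), ‖w - onesVec n‖ ≤ S →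
      0 < ∑ i, v i * w i →
      ∀ βstar : EuclideanSpace ℝ (Fin k),
        (∀ β : EuclideanSpace ℝ (Fin k),
          (1 / ∑ i, v i * w i) * (∑ i, v i * w i * ℓ (y i * ⟪βstar, φ (x i)⟫))
              + (lam / 2) * ‖βstar‖ ^ 2
            ≤ (1 / ∑ i, v i * w i) * (∑ i, v i * w i * ℓ (y i * ⟪β, φ (x i)⟫))
              + (lam / 2) * ‖β‖ ^ 2) →
      ∀ w' : EuclideanSpace ℝ (Fin n'), (∀ i, 0 ≤ w' i) → 0 < ∑ i, w' i →
        ‖w' - onesVec n'‖ ≤ Q → (∑ i, w' i) = (n' : ℝ) →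
        (∑ i, w' i * (if y' i * ⟪βstar, φ (x' i)⟫ ≤ 0 then (1 : ℝ) else 0))
            / (∑ i, w' i)
          ≤ 1 - (m - Q * Real.sqrt (m - m ^ 2 / (n' : ℝ))) / (n' : ℝ) := by

  intro w hwS hE βstar hmin w' hw'nn hw'pos hw'Q hw'sum
  have hRb : ‖βstar - β₀‖ ≤ R := hball w hwS hE βstar hmin
  have hN : (0:ℝ) < (n' : ℝ) := hw'sum ▸ hw'pos
  have hζ01 : ∀ i, ζ i = 0 ∨ ζ i = 1 := by
    intro i; rw [hζ i]; split <;> simp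
  -- pointwise: indicator ≤ 1 - ζ i
  have hind : ∀ i, (if y' i * ⟪βstar, φ (x' i)⟫ ≤ 0 then (1:ℝ) else 0) ≤ 1 - ζ i := by
    intro i
    rw [hζ i]
    by_cases h : 0 < y' i * ⟪β₀, φ (x' i)⟫ - ‖φ (x' i)‖ * R
    · have h2 : |y' i * ⟪βstar - β₀, φ (x' i)⟫| ≤ ‖φ (x' i)‖ * R := by
        rw [abs_mul]
        have hy1 : |y' i| = 1 := by rcases hy' i with h'|h' <;> simp [h']
        rw [hy1, one_mul]
        calc |⟪βstar - β₀, φ (x' i)⟫| ≤ ‖βstar - β₀‖ * ‖φ (x' i)‖ := abs_real_inner_le_norm _ _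
          _ ≤ R * ‖φ (x' i)‖ := mul_le_mul_of_nonneg_right hRb (norm_nonneg _)
          _ = ‖φ (x' i)‖ * R := by ring
      have h1 : y' i * ⟪βstar, φ (x' i)⟫
          = y' i * ⟪β₀, φ (x' i)⟫ + y' i * ⟪βstar - β₀, φ (x' i)⟫ := by
        rw [inner_sub_left]; ring
      have hkey : ¬ (y' i * ⟪βstar, φ (x' i)⟫ ≤ 0) := by
        push_neg
        have := abs_le.mp h2
        nlinarith [this.1]
      rw [if_neg hkey, if_pos h]; norm_num
    · split <;> simp [h]
  -- sum of indicators bound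
  have hsum1 : (∑ i, w' i * (if y' i * ⟪βstar, φ (x' i)⟫ ≤ 0 then (1:ℝ) else 0))
      ≤ (n' : ℝ) - ∑ i, w' i * ζ i := by
    have hle : (∑ i, w' i * (if y' i * ⟪βstar, φ (x' i)⟫ ≤ 0 then (1:ℝ) else 0))
        ≤ ∑ i, w' i * (1 - ζ i) :=
      Finset.sum_le_sum fun i _ => mul_le_mul_of_nonneg_left (hind i) (hw'nn i)
    have heq : ∑ i, w' i * (1 - ζ i) = (n' : ℝ) - ∑ i, w' i * ζ i := by
      rw [← hw'sum]
      rw [← Finset.sum_sub_distrib]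
      congr 1; ext i; ring
    linarith [heq ▸ hle]
  -- norm of z
  set N : ℝ := (n' : ℝ) with hNdef
  have hζsq : ∀ i, ζ i ^ 2 = ζ i := fun i => by rcases hζ01 i with h|h <;> simp [h]
  have hzsum : ∑ i, (ζ i - m / N) ^ 2 = m - m ^ 2 / N := by
    have hcard : (Fintype.card (Fin n') : ℝ) = N := by simp [hNdef]
    have hexp : ∀ i, (ζ i - m / N) ^ 2 = ζ i ^ 2 - 2 * (m / N) * ζ i + (m / N) ^ 2 := by
      intro i; ring
    rw [Finset.sum_congr rfl fun i _ => hexp i]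
    rw [Finset.sum_add_distrib, Finset.sum_sub_distrib, ← Finset.mul_sum]
    rw [Finset.sum_congr rfl fun i _ => hζsq i, ← hm]
    simp only [Finset.sum_const, Finset.card_univ, Fintype.card_fin, nsmul_eq_mul]
    have : (n' : ℝ) = N := rfl
    rw [this]
    field_simp
    ring
  have hznn : (0:ℝ) ≤ m - m ^ 2 / N := hzsum ▸ Finset.sum_nonneg fun i _ => sq_nonneg _
  set z : EuclideanSpace ℝ (Fin n') := WithLp.toLp 2 (fun i => ζ i - m / N) with hzdef
  have hznorm : ‖z‖ = Real.sqrt (m - m ^ 2 / N) := by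
    rw [EuclideanSpace.norm_eq]
    congr 1
    rw [← hzsum]
    exact Finset.sum_congr rfl fun i _ => by rw [Real.norm_eq_abs, sq_abs]
  -- Cauchy-Schwarz
  have husum : ∑ i, (w' i - 1) = 0 := by
    rw [Finset.sum_sub_distrib, hw'sum]; simp [hNdef]
  have hinner : ⟪w' - onesVec n', z⟫ = ∑ i, (w' i - 1) * ζ i := by
    have h1 : ⟪w' - onesVec n', z⟫ = ∑ i, (w' i - 1) * (ζ i - m / N) := by
      rw [PiLp.inner_apply]
      exact Finset.sum_congr rfl fun i _ => by
        simp [onesVec, RCLike.inner_apply, hzdef]; ring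
    rw [h1]
    have h2 : ∀ i, (w' i - 1) * (ζ i - m / N) = (w' i - 1) * ζ i - (m / N) * (w' i - 1) := by
      intro i; ring
    rw [Finset.sum_congr rfl fun i _ => h2 i, Finset.sum_sub_distrib, ← Finset.mul_sum,
      husum, mul_zero, sub_zero]
  have hcs : |∑ i, (w' i - 1) * ζ i| ≤ Q * Real.sqrt (m - m ^ 2 / N) := by
    rw [← hinner]
    calc |⟪w' - onesVec n', z⟫| ≤ ‖w' - onesVec n'‖ * ‖z‖ := abs_real_inner_le_norm _ _
      _ ≤ Q * Real.sqrt (m - m ^ 2 / N) := by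
          rw [hznorm]
          exact mul_le_mul_of_nonneg_right hw'Q (Real.sqrt_nonneg _)
  have hA : m - Q * Real.sqrt (m - m ^ 2 / N) ≤ ∑ i, w' i * ζ i := by
    have hsplit : ∑ i, w' i * ζ i = m + ∑ i, (w' i - 1) * ζ i := by
      rw [hm, ← Finset.sum_add_distrib]
      exact Finset.sum_congr rfl fun i _ => by ring
    have := abs_le.mp hcs
    linarith [this.1]
  -- conclude
  rw [hw'sum]
  rw [div_le_iff₀ hN]
  have hrhs : (1 - (m - Q * Real.sqrt (m - m ^ 2 / N)) / N) * N
      = N - (m - Q * Real.sqrt (m - m ^ 2 / N)) := by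
    rw [sub_mul, one_mul, div_mul_cancel₀ _ (ne_of_gt hN)]
  rw [hrhs]
  linarith
end
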